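/- Let f, g : ℂ → ℂ be complex differentiable and nonvanishing on an open set U containing the closed disc of radius r > 0 centered at λ₀ ∈ ℂ, let E : ℂ → ℂ be complex differentiable on U, nonvanishing on the boundary circle γ of that disc, and set D := f·g·E. Then the counterclockwise circle integrals satisfy ∮_γ D'(λ)/D(λ) dλ = ∮_γ E'(λ)/E(λ) dλ. In particular the number of zeros (with multiplicity) of the Evans function D inside γ equals the winding number of E around the origin along γ. -/

import Mathlib

open Metric circleIntegral

/-- Logarithmic derivative of a nonvanishing holomorphic function integrates to zero. -/
lemma logderiv_circleIntegral_zero (U : Set ℂ) (hU : IsOpen U) (lam₀ : ℂ) (r : ℝ)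
    (hr : 0 ≤ r) (hsub : Metric.closedBall lam₀ r ⊆ U) (h : ℂ → ℂ)
    (hh : DifferentiableOn ℂ h U) (hh0 : ∀ z ∈ U, h z ≠ 0) :
    (∮ z in C(lam₀, r), deriv h z / h z) = 0 := by
  have hderiv : DifferentiableOn ℂ (deriv h) U :=
    ((hh.analyticOnNhd hU).deriv).differentiableOn
  have hdiv : DifferentiableOn ℂ (fun z => deriv h z / h z) U :=
    hderiv.div hh hh0
  exact Complex.circleIntegral_eq_zero_of_differentiable_on_off_countable hr
    Set.countable_empty (hdiv.continuousOn.mono hsub)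
    (fun z hz => (hdiv z (hsub (ball_subset_closedBall hz.1))).differentiableAt
      (hU.mem_nhds (hsub (ball_subset_closedBall hz.1))))


lemma circleIntegral_add' {f g : ℂ → ℂ} {c : ℂ} {R : ℝ} (hf : CircleIntegrable f c R)
    (hg : CircleIntegrable g c R) :
    (∮ z in C(c, R), (f z + g z)) = (∮ z in C(c, R), f z) + ∮ z in C(c, R), g z := by
  simp only [circleIntegral, smul_add, intervalIntegral.integral_add hf.out hg.out]

/-- If `f`, `g` are holomorphic and nonvanishing on an open set containing the closed
disc of radius `r` about `λ₀`, and `E` is holomorphic there and nonvanishing on the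
boundary circle, then writing `D = f·g·E` we have `∮ D'/D = ∮ E'/E` over the circle:
the zero count of the Evans function `D` inside the circle equals the winding number
of `E` along it. -/
theorem evans_log_deriv_eq (U : Set ℂ) (hU : IsOpen U) (lam₀ : ℂ) (r : ℝ) (hr : 0 < r)
    (hsub : Metric.closedBall lam₀ r ⊆ U)
    (f g E : ℂ → ℂ)
    (hf : DifferentiableOn ℂ f U) (hg : DifferentiableOn ℂ g U)
    (hE : DifferentiableOn ℂ E U)
    (hf0 : ∀ z ∈ U, f z ≠ 0)
    (hg0 : ∀ z ∈ U, g z ≠ 0)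
    (hE0 : ∀ z ∈ Metric.sphere lam₀ r, E z ≠ 0)
    (D : ℂ → ℂ) (hD : D = f * g * E) :
    (∮ z in C(lam₀, r), deriv D z / D z) = (∮ z in C(lam₀, r), deriv E z / E z) := by
  have hsph : Metric.sphere lam₀ r ⊆ U := (sphere_subset_closedBall).trans hsub
  have hfd : DifferentiableOn ℂ (deriv f) U := ((hf.analyticOnNhd hU).deriv).differentiableOn
  have hgd : DifferentiableOn ℂ (deriv g) U := ((hg.analyticOnNhd hU).deriv).differentiableOn
  have hEd : DifferentiableOn ℂ (deriv E) U := ((hE.analyticOnNhd hU).deriv).differentiableOn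
  -- pointwise identity on the sphere
  have key : Set.EqOn (fun z => deriv D z / D z)
      (fun z => deriv f z / f z + deriv g z / g z + deriv E z / E z)
      (Metric.sphere lam₀ r) := by
    intro z hz
    have hzU : z ∈ U := hsph hz
    have hfz : DifferentiableAt ℂ f z := (hf z hzU).differentiableAt (hU.mem_nhds hzU)
    have hgz : DifferentiableAt ℂ g z := (hg z hzU).differentiableAt (hU.mem_nhds hzU)
    have hEz : DifferentiableAt ℂ E z := (hE z hzU).differentiableAt (hU.mem_nhds hzU)
    have hDz : deriv D z = deriv f z * g z * E z + f z * deriv g z * E z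
        + f z * g z * deriv E z := by
      rw [hD]
      have : (f * g * E) = fun w => f w * g w * E w := rfl
      rw [this, deriv_fun_mul (c := fun w => f w * g w) (hfz.mul hgz) hEz, deriv_fun_mul hfz hgz]
      ring
    have hDzz : D z = f z * g z * E z := by rw [hD]; rfl
    simp only [hDz, hDzz]
    field_simp [hf0 z hzU, hg0 z hzU, hE0 z hz]
  have hint : ∀ (h : ℂ → ℂ), DifferentiableOn ℂ h U → DifferentiableOn ℂ (deriv h) U →
      (∀ z ∈ Metric.sphere lam₀ r, h z ≠ 0) →
      CircleIntegrable (fun z => deriv h z / h z) lam₀ r := by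
    intro h hh hhd hh0
    exact (((hhd.continuousOn.mono hsph).div (hh.continuousOn.mono hsph) hh0)).circleIntegrable
      hr.le
  have hif : CircleIntegrable (fun z => deriv f z / f z) lam₀ r :=
    hint f hf hfd (fun z hz => hf0 z (hsph hz))
  have hig : CircleIntegrable (fun z => deriv g z / g z) lam₀ r :=
    hint g hg hgd (fun z hz => hg0 z (hsph hz))
  have hiE : CircleIntegrable (fun z => deriv E z / E z) lam₀ r :=
    hint E hE hEd hE0
  calc (∮ z in C(lam₀, r), deriv D z / D z)
      = ∮ z in C(lam₀, r), (deriv f z / f z + deriv g z / g z + deriv E z / E z) :=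
        integral_congr hr.le key
    _ = (∮ z in C(lam₀, r), (deriv f z / f z + deriv g z / g z))
        + ∮ z in C(lam₀, r), deriv E z / E z :=
        circleIntegral_add' (hif.add hig) hiE
    _ = ((∮ z in C(lam₀, r), deriv f z / f z) + ∮ z in C(lam₀, r), deriv g z / g z)
        + ∮ z in C(lam₀, r), deriv E z / E z := by
        rw [circleIntegral_add' hif hig]
    _ = (∮ z in C(lam₀, r), deriv E z / E z) := by
        rw [logderiv_circleIntegral_zero U hU lam₀ r hr.le hsub f hf hf0,
          logderiv_circleIntegral_zero U hU lam₀ r hr.le hsub g hg hg0]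
        ring
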